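/- arXiv:1305.0134 — 2 statements merged into one kernel-verified Lean document; each statement's English description precedes it below -/
import Mathlib

section
/- Assume the finite type E is nonempty. Then for every ordered pair (R,T) of topes on E and every k ∈ {1,2,3}, ρᵏ(R,T) ≠ (R,T); moreover, for every nonempty finite ≼-chain σ of pairs of topes and every k ∈ {1,2,3}, the image set ρᵏ(σ) is not equal to σ. Hence the ℤ/4ℤ-action generated by ρ on the order complex of the tope-pair poset is free. -/
/-- The separation set `S(X,Y)` of two sign vectors. -/
def SepSet {E : Type*} (X Y : E → SignType) : Set E := {e | X e = -(Y e) ∧ X e ≠ 0}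

/-- A tope on `E`: a sign vector with full support. -/
abbrev Tope (E : Type*) : Type _ := { X : E → SignType // ∀ e, X e ≠ 0 }

instance {E : Type*} : Neg (Tope E) :=
  ⟨fun X => ⟨-X.1, fun e h => X.2 e (by revert h; cases hx : X.1 e <;> simp [hx])⟩⟩

/-- The order relation of the tope-pair poset `Q`:
`(T,R) ≼ (T′,R′)` iff `S(T′,T) ⊆ S(T′,R)` and `S(T′,R) ⊆ S(T′,R′)`. -/
def QLE {E : Type*} (p q : Tope E × Tope E) : Prop :=
  SepSet q.1.1 p.1.1 ⊆ SepSet q.1.1 p.2.1 ∧ SepSet q.1.1 p.2.1 ⊆ SepSet q.1.1 q.2.1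

/-- The map `ρ(R,T) = (-T,R)`. -/
def rho {E : Type*} (p : Tope E × Tope E) : Tope E × Tope E := (-p.2, p.1)

lemma tope_neg_apply {E : Type*} (X : Tope E) (e : E) : (-X).1 e = -(X.1 e) := rfl

lemma tope_neg_neg {E : Type*} (X : Tope E) : -(-X) = X :=
  Subtype.ext (funext fun e => neg_neg _)

lemma rho_two {E : Type*} (p : Tope E × Tope E) : rho^[2] p = (-p.1, -p.2) := rfl

lemma rho_four {E : Type*} (p : Tope E × Tope E) : rho^[4] p = p := by
  show (-(-p.1), -(-p.2)) = p
  rw [tope_neg_neg, tope_neg_neg]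

lemma sign_ne_neg : ∀ a : SignType, a ≠ 0 → a ≠ -a := by decide

lemma tope_ne_neg {E : Type*} [Nonempty E] (X : Tope E) : X ≠ -X := by
  intro h
  obtain ⟨e⟩ := ‹Nonempty E›
  have h2 : X.1 e = -(X.1 e) := congrFun (congrArg Subtype.val h) e
  exact sign_ne_neg _ (X.2 e) h2

lemma not_qle_neg₁ {E : Type*} [Nonempty E] (A B : Tope E) :
    ¬ QLE (A, B) (-A, -B) := by
  rintro ⟨h1, h2⟩
  obtain ⟨e⟩ := ‹Nonempty E›
  have he : e ∈ SepSet (-A).1 A.1 := ⟨rfl, (-A).2 e⟩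
  obtain ⟨hb, -⟩ := h1 he
  obtain ⟨hb', -⟩ := h2 (h1 he)
  have h3 : -(A.1 e) = -(B.1 e) := hb
  have h4 : -(A.1 e) = -(-(B.1 e)) := hb'
  have h5 : A.1 e = B.1 e := neg_injective h3
  have h7 : A.1 e = -(B.1 e) := neg_injective h4
  rw [h5] at h7
  exact sign_ne_neg _ (B.2 e) h7

lemma not_qle_neg₂ {E : Type*} [Nonempty E] (A B : Tope E) :
    ¬ QLE (-A, -B) (A, B) := by
  rintro ⟨h1, h2⟩
  obtain ⟨e⟩ := ‹Nonempty E›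
  have he : e ∈ SepSet A.1 (-A).1 := by
    refine ⟨?_, A.2 e⟩
    show A.1 e = -(-(A.1 e))
    rw [neg_neg]
  obtain ⟨hb, -⟩ := h1 he
  obtain ⟨hb', -⟩ := h2 (h1 he)
  have h3 : A.1 e = -(-(B.1 e)) := hb
  have h4 : A.1 e = -(B.1 e) := hb'
  rw [neg_neg] at h3
  rw [h3] at h4
  exact sign_ne_neg _ (B.2 e) h4

/-- If `E` is nonempty, no pair of topes is fixed by `ρ`, `ρ²` or `ρ³`, and no
nonempty finite `≼`-chain is invariant under `ρ`, `ρ²` or `ρ³`: the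
`ℤ/4ℤ`-action generated by `ρ` on the order complex of `Q` is free. -/
theorem rho_action_free (E : Type*) [Fintype E] [DecidableEq E] [Nonempty E] :
    (∀ p : Tope E × Tope E, ∀ k ∈ ({1, 2, 3} : Finset ℕ), rho^[k] p ≠ p) ∧
    (∀ s : Finset (Tope E × Tope E), s.Nonempty → IsChain QLE (s : Set (Tope E × Tope E)) →
      ∀ k ∈ ({1, 2, 3} : Finset ℕ), s.image (rho^[k]) ≠ s) := by
  have hfix : ∀ p : Tope E × Tope E, ∀ k ∈ ({1, 2, 3} : Finset ℕ), rho^[k] p ≠ p := by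
    intro p k hk hfx
    simp only [Finset.mem_insert, Finset.mem_singleton] at hk
    rcases hk with rfl | rfl | rfl
    · have h1 : (-p.2, p.1) = p := hfx
      have h2 : -p.2 = p.1 := congrArg Prod.fst h1
      have h3 : p.1 = p.2 := congrArg Prod.snd h1
      rw [h3] at h2
      exact tope_ne_neg p.2 h2.symm
    · have h1 : (-p.1, -p.2) = p := hfx
      have h2 : -p.1 = p.1 := congrArg Prod.fst h1
      exact tope_ne_neg p.1 h2.symm
    · have h1 : (-(-p.2), -p.1) = p := hfx
      have h2 : -(-p.2) = p.1 := congrArg Prod.fst h1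
      have h3 : -p.1 = p.2 := congrArg Prod.snd h1
      rw [tope_neg_neg] at h2
      rw [h2] at h3
      exact tope_ne_neg p.1 h3.symm
  refine ⟨hfix, ?_⟩
  have key : ∀ s : Finset (Tope E × Tope E), s.Nonempty →
      IsChain QLE (s : Set (Tope E × Tope E)) → s.image (rho^[2]) ≠ s := by
    intro s hne hchain him
    obtain ⟨p, hp⟩ := hne
    have hq : rho^[2] p ∈ s := him ▸ Finset.mem_image_of_mem _ hp
    have hneq : p ≠ rho^[2] p := fun h => hfix p 2 (by decide) h.symm
    have := hchain (by exact_mod_cast hp) (by exact_mod_cast hq) hneq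
    rw [rho_two] at this
    rcases this with h | h
    · exact not_qle_neg₁ p.1 p.2 h
    · exact not_qle_neg₂ p.1 p.2 h
  intro s hne hchain k hk him
  simp only [Finset.mem_insert, Finset.mem_singleton] at hk
  rcases hk with rfl | rfl | rfl
  · apply key s hne hchain
    calc s.image (rho^[2]) = (s.image (rho^[1])).image (rho^[1]) := by
          rw [Finset.image_image]; rfl
      _ = s := by rw [him, him]
  · exact key s hne hchain him
  · apply key s hne hchain
    have h6 : (s.image (rho^[3])).image (rho^[3]) = s := by rw [him, him]
    rw [Finset.image_image] at h6
    have hfun : (rho^[3] ∘ rho^[3] : Tope E × Tope E → Tope E × Tope E) = rho^[2] := by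
      funext x
      show rho^[3] (rho^[3] x) = rho^[2] x
      rw [← Function.iterate_add_apply]
      show rho^[2] (rho^[4] x) = rho^[2] x
      rw [rho_four]
    rw [hfun] at h6
    exact h6
end

section
/- Let A, B, C, D be topes on a finite type E such that (A,B) ≼ (C,D). Then (−D, B) is an upper bound of both (A,B) and (−D,C): that is, (A,B) ≼ (−D,B) and (−D,C) ≼ (−D,B). -/
lemma signAux : ∀ a b c d : SignType,
    a ≠ 0 → b ≠ 0 → c ≠ 0 → d ≠ 0 →
    (c = -a ∧ c ≠ 0 → c = -b ∧ c ≠ 0) →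
    (c = -b ∧ c ≠ 0 → c = -d ∧ c ≠ 0) →
    (-d = -a ∧ -d ≠ 0 → -d = -b ∧ -d ≠ 0) ∧
    (-d = -(-d) ∧ -d ≠ 0 → -d = -c ∧ -d ≠ 0) ∧
    (-d = -c ∧ -d ≠ 0 → -d = -b ∧ -d ≠ 0) := by
  set_option synthInstance.maxSize 2000 in
  set_option synthInstance.maxHeartbeats 1000000 in
  set_option maxHeartbeats 2000000 in
  decide

/-- If `(A,B) ≼ (C,D)` then `(-D,B)` is an upper bound of `(A,B)` and
`(-D,C)` in the tope-pair poset. -/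
theorem join_upper_bound {E : Type*} [Fintype E] (A B C D : Tope E)
    (h : QLE (A, B) (C, D)) :
    QLE (A, B) (-D, B) ∧ QLE (-D, C) (-D, B) := by
  obtain ⟨h1, h2⟩ := h
  have key : ∀ e : E, _ := fun e =>
    signAux (A.1 e) (B.1 e) (C.1 e) (D.1 e) (A.2 e) (B.2 e) (C.2 e) (D.2 e) (@h1 e) (@h2 e)
  exact ⟨⟨fun e he => (key e).1 he, fun e he => he⟩,
    fun e he => (key e).2.1 he, fun e he => (key e).2.2 he⟩
end
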